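/- If p is a prime number, then there exists a positive integer n with φ(n) = 2p if and only if 2p+1 is prime. -/

import Mathlib

lemma key_lemma (p : ℕ) (hp : p.Prime) : ∀ n : ℕ, 0 < n → p ∣ Nat.totient n →
    (∃ q : ℕ, q.Prime ∧ q ∣ n ∧ p ∣ q - 1) ∨ p ^ 2 ∣ n := by
  intro n
  induction n using Nat.strong_induction_on with
  | _ n ih =>
    intro hn hdvd
    rcases eq_or_ne n 1 with rfl | hn1
    · simp [Nat.totient_one] at hdvd
      exact absurd hdvd hp.ne_one
    obtain ⟨q, hq, hqn⟩ := Nat.exists_prime_and_dvd hn1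
    set k := n.factorization q with hk
    have hk1 : 0 < k := Nat.Prime.factorization_pos_of_dvd hq hn.ne' hqn
    set m := n / q ^ k with hm
    have hcop : Nat.Coprime q m := Nat.coprime_ordCompl hq hn.ne'
    have hnm : q ^ k * m = n := Nat.ordProj_mul_ordCompl_eq_self n q
    have hmpos : 0 < m := by
      rcases Nat.eq_zero_or_pos m with h0 | h; · rw [h0, mul_zero] at hnm; omega
      exact h
    have htot : Nat.totient n = q ^ (k - 1) * (q - 1) * Nat.totient m := by
      rw [← hnm, Nat.totient_mul (Nat.Coprime.pow_left _ hcop),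
        Nat.totient_prime_pow hq hk1]
    rw [htot] at hdvd
    rcases (hp.dvd_mul.mp hdvd) with h | h
    · rcases (hp.dvd_mul.mp h) with h1 | h1
      · -- p ∣ q ^ (k-1), so p = q and k ≥ 2
        have hpq : p = q := by
          rcases Nat.Prime.dvd_of_dvd_pow hp h1 with h2
          exact (Nat.prime_dvd_prime_iff_eq hp hq).mp h2
        have hk2 : 2 ≤ k := by
          by_contra hlt
          have hk1' : k = 1 := by omega
          rw [hk1'] at h1; simp at h1
          exact hp.ne_one h1
        right
        rw [hpq]
        exact dvd_trans (pow_dvd_pow q hk2) (Nat.ordProj_dvd n q)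
      · exact Or.inl ⟨q, hq, hqn, h1⟩
    · -- p ∣ φ m, recurse
      have hmlt : m < n := by
        have hq2 : 2 ≤ q ^ k := by
          calc 2 ≤ q := hq.two_le
          _ ≤ q ^ k := Nat.le_self_pow hk1.ne' q
        nlinarith [hnm]
      rcases ih m hmlt hmpos h with ⟨q', hq', hq'm, hpq'⟩ | hsq
      · exact Or.inl ⟨q', hq', hq'm.trans ⟨q ^ k, by rw [mul_comm, hnm]⟩, hpq'⟩
      · exact Or.inr (hsq.trans ⟨q ^ k, by rw [mul_comm, hnm]⟩)

theorem two_p_in_image_iff (p : ℕ) (hp : p.Prime) :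
    (∃ n : ℕ, 0 < n ∧ Nat.totient n = 2 * p) ↔ Nat.Prime (2 * p + 1) := by
  constructor
  · rintro ⟨n, hn, htot⟩
    rcases eq_or_ne p 2 with rfl | hp2
    · norm_num
    have hodd : Odd p := hp.odd_of_ne_two hp2
    have hp3 : 3 ≤ p := by
      have := hp.two_le; rcases hodd with ⟨j, hj⟩; omega
    have hpd : p ∣ Nat.totient n := htot ▸ ⟨2, by ring⟩
    rcases key_lemma p hp n hn hpd with ⟨q, hq, hqn, hpq⟩ | hsq
    · have h1 : q - 1 ∣ 2 * p := by
        have := Nat.totient_dvd_of_dvd hqn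
        rwa [Nat.totient_prime hq, htot] at this
      obtain ⟨t, ht⟩ := hpq
      have ht2 : t ∣ 2 := by
        have : p * t ∣ p * 2 := by rw [← ht, mul_comm p 2]; exact h1
        exact (Nat.mul_dvd_mul_iff_left hp.pos).mp this
      have htpos : 0 < t := by
        rcases Nat.eq_zero_or_pos t with h0 | h
        · rw [h0, mul_zero] at ht
          have := hq.two_le; omega
        · exact h
      have htle : t ≤ 2 := Nat.le_of_dvd (by norm_num) ht2
      interval_cases t
      · -- q = p + 1, q even prime > 2, contradiction
        exfalso
        have hq1 : q = p + 1 := by have := hq.two_le; omega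
        have heven : Even q := by rw [hq1]; exact hodd.add_one
        have := (Nat.Prime.even_iff hq).mp heven
        omega
      · have hq1 : q = 2 * p + 1 := by have := hq.two_le; omega
        rwa [hq1] at hq
    · -- p^2 ∣ n forces p = 3
      have h1 : p * (p - 1) ∣ 2 * p := by
        have := Nat.totient_dvd_of_dvd hsq
        rwa [Nat.totient_prime_pow hp (by norm_num), pow_one, htot] at this
      have h2 : p - 1 ∣ 2 := by
        have : p * (p - 1) ∣ p * 2 := by rwa [mul_comm p 2]
        exact (Nat.mul_dvd_mul_iff_left hp.pos).mp this
      have := Nat.le_of_dvd (by norm_num) h2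
      have hp3' : p = 3 := by omega
      subst hp3'
      norm_num
  · intro h
    exact ⟨2 * p + 1, by positivity, by rw [Nat.totient_prime h]; omega⟩
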